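/- Let G be a finite multidigraph with an edge e* = (w*, v*). If every vertex of G has in-degree at least 1 and the vertex v* has in-degree at least 2, then the map ρ : ℤE → ℤV (sending e ↦ Δ_G(w*) − v* − w* + e⁺ for e ≠ e* and e* ↦ 0) descends to a surjective group homomorphism ρ̄ from the critical group K(𝓛G, e*) of the line graph onto the critical group K(G, w*). -/

import Mathlib

open Finsupp

/-- The Laplacian of a multidigraph with edge tail map `t` and head map `h`,
as a linear endomorphism of the free abelian group on the vertices. -/
noncomputable def lap {V E : Type*} [Fintype E] [DecidableEq V] (t h : E → V) :
    (V →₀ ℤ) →ₗ[ℤ] (V →₀ ℤ) :=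
  Finsupp.lift (V →₀ ℤ) ℤ V fun v =>
    ∑ e : E, if t e = v then Finsupp.single (h e) (1 : ℤ) - Finsupp.single v 1 else 0

/-- The modified Laplacian `φ_{G,w}` : sends `v ↦ Δ_G v` for `v ≠ w`, and `w ↦ w`. -/
noncomputable def phiMod {V E : Type*} [Fintype E] [DecidableEq V] (t h : E → V) (w : V) :
    (V →₀ ℤ) →ₗ[ℤ] (V →₀ ℤ) :=
  Finsupp.lift (V →₀ ℤ) ℤ V fun v =>
    if v = w then Finsupp.single w 1 else lap t h (Finsupp.single v 1)

/-- Edges of the directed line graph: pairs `(e, f)` with `e⁺ = f⁻`. -/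
def LineEdge {V E : Type*} (t h : E → V) : Type _ := {p : E × E // h p.1 = t p.2}

instance {V E : Type*} [Fintype E] [DecidableEq V] (t h : E → V) :
    Fintype (LineEdge t h) := by
  unfold LineEdge; infer_instance

/-- in-degree of a vertex -/
def indeg {V E : Type*} [Fintype E] [DecidableEq V] (h : E → V) (v : V) : ℕ :=
  (Finset.univ.filter fun e => h e = v).card

/-- out-degree of a vertex -/
def outdeg {V E : Type*} [Fintype E] [DecidableEq V] (t : E → V) (v : V) : ℕ :=
  (Finset.univ.filter fun e => t e = v).card

/-- The modified target map `τ`: `e ↦ e⁺` for `e ≠ e*`, `e* ↦ 0`. -/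
noncomputable def tau {V E : Type*} [DecidableEq E] (h : E → V) (estar : E) :
    (E →₀ ℤ) →ₗ[ℤ] (V →₀ ℤ) :=
  Finsupp.lift (V →₀ ℤ) ℤ E fun e =>
    if e = estar then 0 else Finsupp.single (h e) 1

/-- The map `ρ`: `e ↦ Δ_G(w*) − v* − w* + e⁺` for `e ≠ e*`, `e* ↦ 0`,
where `w* = t e*` and `v* = h e*`. -/
noncomputable def rho {V E : Type*} [Fintype E] [DecidableEq V] [DecidableEq E]
    (t h : E → V) (estar : E) : (E →₀ ℤ) →ₗ[ℤ] (V →₀ ℤ) :=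
  Finsupp.lift (V →₀ ℤ) ℤ E fun e =>
    if e = estar then 0 else
      lap t h (Finsupp.single (t estar) 1) - Finsupp.single (h estar) 1
        - Finsupp.single (t estar) 1 + Finsupp.single (h e) 1

/-- The map `ρ₀`: `v ↦ Δ_G(w*) − v* − w* + v`. -/
noncomputable def rho0 {V E : Type*} [Fintype E] [DecidableEq V] (t h : E → V) (estar : E) :
    (V →₀ ℤ) →ₗ[ℤ] (V →₀ ℤ) :=
  Finsupp.lift (V →₀ ℤ) ℤ V fun v =>
    lap t h (Finsupp.single (t estar) 1) - Finsupp.single (h estar) 1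
      - Finsupp.single (t estar) 1 + Finsupp.single v 1

/-- The map `ψ`: `v ↦ Δ_G v` for `v ≠ w*`, and `w* ↦ Δ_G(w*) − v*`. -/
noncomputable def psi {V E : Type*} [Fintype E] [DecidableEq V] (t h : E → V) (estar : E) :
    (V →₀ ℤ) →ₗ[ℤ] (V →₀ ℤ) :=
  Finsupp.lift (V →₀ ℤ) ℤ V fun v =>
    if v = t estar then
      lap t h (Finsupp.single (t estar) 1) - Finsupp.single (h estar) 1
    else lap t h (Finsupp.single v 1)

/-- The map `σ`: `v ↦ Σ_{e⁻ = v} e`. -/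
noncomputable def sigmaMap {V E : Type*} [Fintype E] [DecidableEq V] (t : E → V) :
    (V →₀ ℤ) →ₗ[ℤ] (E →₀ ℤ) :=
  Finsupp.lift (E →₀ ℤ) ℤ V fun v =>
    ∑ e : E, if t e = v then Finsupp.single e (1 : ℤ) else 0

set_option linter.unusedSectionVars false

section lemmas
variable {V E : Type*} [Fintype E] [DecidableEq V] [DecidableEq E] (t h : E → V) (estar : E)

omit [DecidableEq E] in
lemma lap_single (v : V) :
    lap t h (Finsupp.single v 1) =
      ∑ e : E, if t e = v then Finsupp.single (h e) (1 : ℤ) - Finsupp.single v 1 else 0 := by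
  simp [lap, Finsupp.lift_apply, Finsupp.sum_single_index]

omit [DecidableEq E] in
lemma phiMod_single (w v : V) :
    phiMod t h w (Finsupp.single v 1) =
      if v = w then Finsupp.single w 1 else lap t h (Finsupp.single v 1) := by
  simp [phiMod, Finsupp.lift_apply, Finsupp.sum_single_index]

lemma rho_single (e : E) :
    rho t h estar (Finsupp.single e 1) =
      if e = estar then 0 else
        lap t h (Finsupp.single (t estar) 1) - Finsupp.single (h estar) 1
          - Finsupp.single (t estar) 1 + Finsupp.single (h e) 1 := by
  simp [rho, Finsupp.lift_apply, Finsupp.sum_single_index]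

lemma tau_single (e : E) :
    tau h estar (Finsupp.single e 1) =
      if e = estar then 0 else Finsupp.single (h e) 1 := by
  simp [tau, Finsupp.lift_apply, Finsupp.sum_single_index]

lemma sum_lineEdge {M : Type*} [AddCommMonoid M] (e : E) (g : E → M) :
    (∑ p : LineEdge t h, if p.val.1 = e then g p.val.2 else 0)
      = ∑ f : E, if t f = h e then g f else 0 := by
  have h1 : (∑ q ∈ Finset.univ.filter (fun q : E × E => h q.1 = t q.2),
        (if q.1 = e then g q.2 else 0))
      = ∑ q : {q : E × E // h q.1 = t q.2}, (if q.val.1 = e then g q.val.2 else 0) :=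
    Finset.sum_subtype _ (by simp) _
  have h2 : (∑ p : LineEdge t h, if p.val.1 = e then g p.val.2 else 0)
      = ∑ q : {q : E × E // h q.1 = t q.2}, (if q.val.1 = e then g q.val.2 else 0) := rfl
  rw [h2, ← h1]
  rw [Finset.sum_filter, Fintype.sum_prod_type, Finset.sum_comm]
  congr 1
  ext f
  rw [Finset.sum_congr rfl (fun a _ => show (if h a = t f then if a = e then g f else 0 else 0)
      = (if a = e then (if t f = h e then g f else 0) else 0) by
    by_cases ha : a = e <;> by_cases hf : h a = t f <;> simp_all [eq_comm])]
  simp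

lemma key_comp :
    (rho t h estar) ∘ₗ
        (phiMod (fun p : LineEdge t h => p.1.1) (fun p : LineEdge t h => p.1.2) estar)
      = (phiMod t h (t estar)) ∘ₗ (tau h estar) := by
  apply Finsupp.lhom_ext'
  intro e
  apply LinearMap.ext_ring
  simp only [LinearMap.comp_apply, Finsupp.lsingle_apply]
  by_cases he : e = estar
  · subst he
    rw [phiMod_single, if_pos rfl, rho_single, if_pos rfl, tau_single, if_pos rfl, map_zero]
  · rw [phiMod_single, if_neg he, tau_single, if_neg he, lap_single, map_sum]
    simp only [apply_ite (rho t h estar), map_sub, map_zero]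
    rw [sum_lineEdge t h e (fun f => rho t h estar (Finsupp.single f 1)
        - rho t h estar (Finsupp.single e 1))]
    have step : ∀ f : E,
        (if t f = h e then rho t h estar (Finsupp.single f 1)
            - rho t h estar (Finsupp.single e 1) else 0)
        = (if t f = h e then Finsupp.single (h f) (1:ℤ) - Finsupp.single (h e) 1 else 0)
          - (if t f = h e then (if f = estar then (lap t h (Finsupp.single (t estar) 1) - Finsupp.single (h estar) 1
              - Finsupp.single (t estar) 1) + Finsupp.single (h estar) 1 else 0)
              else 0) := by
      intro f
      by_cases htf : t f = h e
      · rw [if_pos htf, if_pos htf, if_pos htf, rho_single, rho_single, if_neg he]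
        by_cases hf : f = estar
        · rw [if_pos hf, if_pos hf, hf]
          abel
        · rw [if_neg hf, if_neg hf]
          abel
      · simp [htf]
    rw [Finset.sum_congr rfl (fun f _ => step f), Finset.sum_sub_distrib]
    rw [← lap_single t h (h e)]
    have step2 : ∀ f : E,
        (if t f = h e then (if f = estar then (lap t h (Finsupp.single (t estar) 1) - Finsupp.single (h estar) 1
              - Finsupp.single (t estar) 1) + Finsupp.single (h estar) (1:ℤ) else 0) else 0)
        = (if f = estar then (if t estar = h e then (lap t h (Finsupp.single (t estar) 1) - Finsupp.single (h estar) 1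
              - Finsupp.single (t estar) 1) + Finsupp.single (h estar) (1:ℤ) else 0)
            else 0) := by
      intro f
      by_cases hf : f = estar
      · subst hf; simp
      · simp [hf]
    rw [Finset.sum_congr rfl (fun f _ => step2 f), Finset.sum_ite_eq' Finset.univ estar]
    simp only [Finset.mem_univ, if_true]
    rw [phiMod_single t h (t estar) (h e)]
    by_cases hw : h e = t estar
    · rw [if_pos hw, if_pos hw.symm, hw]
      abel
    · rw [if_neg hw, if_neg (fun hh => hw hh.symm)]
      abel
end lemmas

/-- under the in-degree hypotheses, `ρ` descends to a surjective
homomorphism from the critical group of the line graph `K(𝓛G, e*)` onto `K(G, w*)`. -/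
theorem rho_descends_to_surjection_of_critical_groups
    {V E : Type*} [Fintype V] [Fintype E] [DecidableEq V] [DecidableEq E]
    (t h : E → V) (estar : E)
    (hin : ∀ v : V, 1 ≤ indeg h v) (hv : 2 ≤ indeg h (h estar)) :
    ∃ ρbar : ((E →₀ ℤ) ⧸ LinearMap.range
          (phiMod (fun p : LineEdge t h => p.1.1) (fun p : LineEdge t h => p.1.2) estar)) →ₗ[ℤ]
        ((V →₀ ℤ) ⧸ LinearMap.range (phiMod t h (t estar))),
      Function.Surjective ρbar ∧
        ∀ x : E →₀ ℤ,
          ρbar (Submodule.Quotient.mk x) = Submodule.Quotient.mk (rho t h estar x) := by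
  classical
  set ΦL := phiMod (fun p : LineEdge t h => p.1.1) (fun p : LineEdge t h => p.1.2) estar with hΦL
  set ΦG := phiMod t h (t estar) with hΦG
  set R := rho t h estar with hR
  have hker : LinearMap.range ΦL ≤ LinearMap.ker
      ((LinearMap.range ΦG).mkQ ∘ₗ R) := by
    rintro x ⟨y, rfl⟩
    simp only [LinearMap.mem_ker, LinearMap.comp_apply]
    have hco : R (ΦL y) = ΦG (tau h estar y) := LinearMap.congr_fun (key_comp t h estar) y
    rw [hco, Submodule.mkQ_apply, Submodule.Quotient.mk_eq_zero]
    exact ⟨tau h estar y, rfl⟩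
  refine ⟨Submodule.liftQ _ _ hker, ?_, ?_⟩
  · -- surjectivity
    have hedge : ∀ v : V, ∃ e : E, e ≠ estar ∧ h e = v := by
      intro v
      by_cases hvv : v = h estar
      · subst hvv
        obtain ⟨a, ha, b, hb, hab⟩ := Finset.one_lt_card.mp hv
        simp only [Finset.mem_filter, Finset.mem_univ, true_and] at ha hb
        by_cases hae : a = estar
        · exact ⟨b, by rintro rfl; exact hab (hae ▸ rfl), hb⟩
        · exact ⟨a, hae, ha⟩
      · obtain ⟨e, he⟩ := Finset.card_pos.mp (hin v)
        simp only [Finset.mem_filter, Finset.mem_univ, true_and] at he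
        exact ⟨e, by rintro rfl; exact hvv he.symm, he⟩
    set M := LinearMap.range R ⊔ LinearMap.range ΦG with hM
    have hwmem : Finsupp.single (t estar) (1:ℤ) ∈ M := by
      refine Submodule.mem_sup_right ⟨Finsupp.single (t estar) 1, ?_⟩
      rw [hΦG, phiMod_single, if_pos rfl]
    have h1 : ∀ v : V, (lap t h (Finsupp.single (t estar) 1) - Finsupp.single (h estar) 1
        - Finsupp.single (t estar) 1) + Finsupp.single v 1 ∈ M := by
      intro v
      obtain ⟨e, hne, he⟩ := hedge v
      refine Submodule.mem_sup_left ⟨Finsupp.single e 1, ?_⟩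
      rw [hR, rho_single, if_neg hne, he]
    have hcmem : lap t h (Finsupp.single (t estar) 1) - Finsupp.single (h estar) 1
        - Finsupp.single (t estar) 1 ∈ M := by
      have := M.sub_mem (h1 (t estar)) hwmem
      simpa using this
    have hsingle : ∀ v : V, Finsupp.single v (1:ℤ) ∈ M := by
      intro v
      have := M.sub_mem (h1 v) hcmem
      simpa using this
    have htop : M = ⊤ := by
      rw [eq_top_iff]
      rintro y -
      induction y using Finsupp.induction_linear with
      | zero => exact M.zero_mem
      | add f g hf hg => exact M.add_mem hf hg
      | single a b =>
        have := M.smul_mem b (hsingle a)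
        simpa using this
    intro z
    obtain ⟨y, rfl⟩ := Submodule.Quotient.mk_surjective _ z
    have hy : y ∈ M := htop.symm ▸ Submodule.mem_top
    obtain ⟨a, ha, b, hb, hab⟩ := Submodule.mem_sup.mp hy
    obtain ⟨x, rfl⟩ := ha
    obtain ⟨u, rfl⟩ := hb
    refine ⟨Submodule.Quotient.mk x, ?_⟩
    rw [Submodule.liftQ_apply, LinearMap.comp_apply, Submodule.mkQ_apply, ← hab]
    rw [Submodule.Quotient.eq]
    have : R x - (R x + ΦG u) = -(ΦG u) := by abel
    rw [this]
    exact (LinearMap.range ΦG).neg_mem ⟨u, rfl⟩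
  · intro x
    rw [Submodule.liftQ_apply, LinearMap.comp_apply, Submodule.mkQ_apply, hR]
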